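/- Let d ∈ ℕ and ρ > 0. Let ℓ : ℝᵈ × ℝᵈ → ℝ be such that for every x ∈ ℝᵈ the map u ↦ ℓ(x,u) is twice continuously differentiable with ⟨∂²_{uu}ℓ(x,u)·v, v⟩ ≥ ρ·|v|² for all u, v ∈ ℝᵈ, and suppose for each (x,p) the function u ↦ ℓ(x,u) + (b(x)+u)·p has a unique minimizer w(x,p), where b : ℝᵈ → ℝᵈ. Then: (i) for every x, the map p ↦ w(x,p) is Lipschitz continuous with constant 1/ρ, i.e. |w(x,p) − w(x,p̂)| ≤ (1/ρ)|p − p̂| for all p, p̂ ∈ ℝᵈ; (ii) if in addition there is C_{ux} ≥ 0 such that |∂_u ℓ(x,u) − ∂_u ℓ(x̂,u)| ≤ C_{ux}·|x − x̂| for all x, x̂, u ∈ ℝᵈ, then |w(x,p) − w(x̂,p)| ≤ (C_{ux}/ρ)·|x − x̂| for all x, x̂, p ∈ ℝᵈ. -/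

import Mathlib

open RealInnerProductSpace

private lemma aux_mono {E : Type*} [NormedAddCommGroup E] [InnerProductSpace ℝ E]
    {ρ : ℝ} {f : E → ℝ} (hf : ContDiff ℝ 2 f)
    (hconv : ∀ u v : E, ρ * ‖v‖ ^ 2 ≤ iteratedFDeriv ℝ 2 f u ![v, v]) (u v : E) :
    ρ * ‖u - v‖ ^ 2 ≤ fderiv ℝ f u (u - v) - fderiv ℝ f v (u - v) := by
  set e := u - v with he
  have hF : ContDiff ℝ 1 (fun y => fderiv ℝ f y) := hf.fderiv_right (by norm_num)
  set φ : ℝ → ℝ := fun t => fderiv ℝ f (v + t • e) e with hφ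
  have hd : ∀ t : ℝ, HasDerivAt φ (fderiv ℝ (fderiv ℝ f) (v + t • e) e e) t := by
    intro t
    have hγ : HasDerivAt (fun t : ℝ => v + t • e) e t := by
      simpa using ((hasDerivAt_id t).smul_const e).const_add v
    have h1 : HasDerivAt (fun t : ℝ => fderiv ℝ f (v + t • e))
        (fderiv ℝ (fderiv ℝ f) (v + t • e) e) t :=
      ((hF.differentiable one_ne_zero) (v + t • e)).hasFDerivAt.comp_hasDerivAt t hγ
    have := (ContinuousLinearMap.apply ℝ ℝ e).hasFDerivAt.comp_hasDerivAt t h1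
    exact this
  obtain ⟨c, hc, heq⟩ := exists_hasDerivAt_eq_slope φ
      (fun t => fderiv ℝ (fderiv ℝ f) (v + t • e) e e) one_pos
      (fun t _ => (hd t).continuousAt.continuousWithinAt)
      (fun t _ => hd t)
  have hb := hconv (v + c • e) e
  rw [iteratedFDeriv_two_apply] at hb
  simp only [Matrix.cons_val_zero, Matrix.cons_val_one, Matrix.head_cons] at hb
  rw [heq] at hb
  have h1 : v + (1:ℝ) • e = u := by rw [one_smul, he]; abel
  have h0 : v + (0:ℝ) • e = v := by simp
  simp only [hφ, h1, h0] at hb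
  calc ρ * ‖e‖ ^ 2 ≤ (fderiv ℝ f u e - fderiv ℝ f v e) / (1 - 0) := hb
    _ = fderiv ℝ f u e - fderiv ℝ f v e := by norm_num

private lemma aux_foc {E : Type*} [NormedAddCommGroup E] [InnerProductSpace ℝ E]
    {f : E → ℝ} (hf : Differentiable ℝ f) (b p m : E)
    (hm : ∀ u, f m + ⟪b + m, p⟫ ≤ f u + ⟪b + u, p⟫) :
    fderiv ℝ f m = -(innerSL ℝ p) := by
  have hg : HasFDerivAt (fun u => f u + (innerSL ℝ p) (b + u))
      (fderiv ℝ f m + innerSL ℝ p) m := by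
    have h2 : HasFDerivAt (fun u : E => (innerSL ℝ p) (b + u)) (innerSL ℝ p) m := by
      exact ((innerSL ℝ p).hasFDerivAt.comp m ((hasFDerivAt_id m).const_add b)).congr_fderiv
        (ContinuousLinearMap.comp_id _)
    exact (hf m).hasFDerivAt.add h2
  have hmin : IsLocalMin (fun u => f u + (innerSL ℝ p) (b + u)) m := by
    apply Filter.Eventually.of_forall
    intro u
    simpa [innerSL_apply_apply, real_inner_comm] using hm u
  have h0 := hmin.hasFDerivAt_eq_zero hg
  exact eq_neg_of_add_eq_zero_left h0

theorem stmt7 (d : ℕ) (ρ : ℝ) (hρ : 0 < ρ)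
    (ℓ : EuclideanSpace ℝ (Fin d) → EuclideanSpace ℝ (Fin d) → ℝ)
    (b : EuclideanSpace ℝ (Fin d) → EuclideanSpace ℝ (Fin d))
    (w : EuclideanSpace ℝ (Fin d) → EuclideanSpace ℝ (Fin d) → EuclideanSpace ℝ (Fin d))
    (hsmooth : ∀ x, ContDiff ℝ 2 (ℓ x))
    (hconv : ∀ x u v : EuclideanSpace ℝ (Fin d),
      ρ * ‖v‖ ^ 2 ≤ iteratedFDeriv ℝ 2 (ℓ x) u ![v, v])
    (hw : ∀ x p, ∀ u, ℓ x (w x p) + ⟪b x + w x p, p⟫ ≤ ℓ x u + ⟪b x + u, p⟫)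
    (hwuniq : ∀ x p w',
      (∀ u, ℓ x w' + ⟪b x + w', p⟫ ≤ ℓ x u + ⟪b x + u, p⟫) → w' = w x p) :
    (∀ x p p', ‖w x p - w x p'‖ ≤ (1 / ρ) * ‖p - p'‖) ∧
    (∀ Cux : ℝ, 0 ≤ Cux →
      (∀ x x' u : EuclideanSpace ℝ (Fin d),
        ‖fderiv ℝ (ℓ x) u - fderiv ℝ (ℓ x') u‖ ≤ Cux * ‖x - x'‖) →
      ∀ x x' p, ‖w x p - w x' p‖ ≤ (Cux / ρ) * ‖x - x'‖) := by
  have hmono : ∀ x (a c : EuclideanSpace ℝ (Fin d)),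
      ρ * ‖a - c‖ ^ 2 ≤ fderiv ℝ (ℓ x) a (a - c) - fderiv ℝ (ℓ x) c (a - c) :=
    fun x => aux_mono (hsmooth x) (hconv x)
  have hdiff : ∀ x, Differentiable ℝ (ℓ x) := fun x => (hsmooth x).differentiable two_ne_zero
  have hfoc : ∀ x p, fderiv ℝ (ℓ x) (w x p) = -(innerSL ℝ p) :=
    fun x p => aux_foc (hdiff x) (b x) p (w x p) (hw x p)
  constructor
  · intro x p p'
    set a := w x p with ha
    set c := w x p' with hc
    have h1 := hmono x a c
    rw [ha, hc, hfoc x p, hfoc x p'] at h1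
    have h2 : (-(innerSL ℝ p)) (a - c) - (-(innerSL ℝ p')) (a - c)
        = ⟪p' - p, a - c⟫ := by
      simp [inner_sub_left]; ring
    rw [h2] at h1
    have h3 : (⟪p' - p, a - c⟫ : ℝ) ≤ ‖p - p'‖ * ‖a - c‖ := by
      calc (⟪p' - p, a - c⟫ : ℝ) ≤ ‖p' - p‖ * ‖a - c‖ := real_inner_le_norm _ _
        _ = ‖p - p'‖ * ‖a - c‖ := by rw [norm_sub_rev]
    have hsq : ρ * ‖a - c‖ ^ 2 ≤ ‖p - p'‖ * ‖a - c‖ := le_trans h1 h3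
    rcases eq_or_lt_of_le (norm_nonneg (a - c)) with h0 | h0
    · rw [← h0]; positivity
    · have hkey : ρ * ‖a - c‖ ≤ ‖p - p'‖ := by nlinarith
      calc ‖a - c‖ = (1 / ρ) * (ρ * ‖a - c‖) := by field_simp
        _ ≤ (1 / ρ) * ‖p - p'‖ := by
            apply mul_le_mul_of_nonneg_left hkey (by positivity)
  · intro Cux hC hder x x' p
    set a := w x p with ha
    set c := w x' p with hc
    have h1 := hmono x a c
    have e1 : fderiv ℝ (ℓ x) a = -(innerSL ℝ p) := by rw [ha]; exact hfoc x p
    have e2 : fderiv ℝ (ℓ x') c = -(innerSL ℝ p) := by rw [hc]; exact hfoc x' p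
    have h2 : fderiv ℝ (ℓ x) a (a - c) - fderiv ℝ (ℓ x) c (a - c)
        = (fderiv ℝ (ℓ x') c - fderiv ℝ (ℓ x) c) (a - c) := by
      rw [e1, ContinuousLinearMap.sub_apply, e2]
    rw [h2] at h1
    have h3 : (fderiv ℝ (ℓ x') c - fderiv ℝ (ℓ x) c) (a - c)
        ≤ Cux * ‖x - x'‖ * ‖a - c‖ := by
      have hle : ‖fderiv ℝ (ℓ x') c - fderiv ℝ (ℓ x) c‖ ≤ Cux * ‖x - x'‖ := by
        calc ‖fderiv ℝ (ℓ x') c - fderiv ℝ (ℓ x) c‖ ≤ Cux * ‖x' - x‖ := hder x' x c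
          _ = Cux * ‖x - x'‖ := by rw [norm_sub_rev]
      calc (fderiv ℝ (ℓ x') c - fderiv ℝ (ℓ x) c) (a - c)
          ≤ ‖(fderiv ℝ (ℓ x') c - fderiv ℝ (ℓ x) c) (a - c)‖ := le_abs_self _
        _ ≤ ‖fderiv ℝ (ℓ x') c - fderiv ℝ (ℓ x) c‖ * ‖a - c‖ :=
            (fderiv ℝ (ℓ x') c - fderiv ℝ (ℓ x) c).le_opNorm _
        _ ≤ Cux * ‖x - x'‖ * ‖a - c‖ := by
            apply mul_le_mul_of_nonneg_right hle (norm_nonneg _)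
    have hsq : ρ * ‖a - c‖ ^ 2 ≤ Cux * ‖x - x'‖ * ‖a - c‖ := le_trans h1 h3
    rcases eq_or_lt_of_le (norm_nonneg (a - c)) with h0 | h0
    · rw [← h0]; positivity
    · have hkey : ρ * ‖a - c‖ ≤ Cux * ‖x - x'‖ := by nlinarith
      calc ‖a - c‖ = (1 / ρ) * (ρ * ‖a - c‖) := by field_simp
        _ ≤ (1 / ρ) * (Cux * ‖x - x'‖) := by
            apply mul_le_mul_of_nonneg_left hkey (by positivity)
        _ = (Cux / ρ) * ‖x - x'‖ := by ring
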